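/- arXiv:2212.06913 — 4 statements merged into one kernel-verified Lean document; each statement's English description precedes it below -/
import Mathlib

section
/- Let α > 1, t > 0 and x ∈ ℝ, x ≠ 0. Then the symmetric Fresnel pseudo-density satisfies u_{2α}(x,t) = (α t/(π x)) · ∫_0^∞ e^{-t y^α} y^{α-1} sin(x y cos(π/(2α))) cosh(x y sin(π/(2α))) dy; i.e., writing g_α(y; τ) = α (y^{α-1}/τ) exp(−y^α/τ) for the Weibull density with parameters α and τ = 1/t, one has u_{2α}(x,t) = (1/(π x)) E[sin(x cos(π/(2α)) G) cosh(x sin(π/(2α)) G)] where G has density g_α(·; 1/t). -/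
open Real MeasureTheory Set

/-- The symmetric Fresnel pseudo-density `u_{2α}(x,t)`, defined by its
(everywhere absolutely convergent) power series. -/
noncomputable def fresnelDensity (α x t : ℝ) : ℝ :=
  (1 / (α * π * t ^ (1 / α))) *
    ∑' k : ℕ, (x / t ^ (1 / α)) ^ (2 * k) *
      (Real.Gamma ((2 * k + 1) / α) / (2 * k).factorial) *
      Real.sin (π * (2 * k + 1) * (α + 1) / (2 * α))

lemma fresnel_hasSum_sin_mul_cosh (θ r : ℝ) :
    HasSum (fun n : ℕ => (-1) ^ n * r ^ (2 * n + 1) * Real.cos ((2 * n + 1) * θ) /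
        (2 * n + 1).factorial)
      (Real.sin (r * Real.cos θ) * Real.cosh (r * Real.sin θ)) := by
  have h := (Complex.hasSum_sin ((r : ℂ) * Complex.exp (θ * Complex.I))).mapL Complex.reCLM
  have hterm : ∀ n : ℕ,
      Complex.reCLM ((-1) ^ n * ((r : ℂ) * Complex.exp (θ * Complex.I)) ^ (2 * n + 1) /
        ((2 * n + 1).factorial : ℂ))
      = (-1) ^ n * r ^ (2 * n + 1) * Real.cos ((2 * n + 1) * θ) / (2 * n + 1).factorial := by
    intro n
    have e1 : ((-1 : ℂ)) ^ n * ((r : ℂ) * Complex.exp (θ * Complex.I)) ^ (2 * n + 1) /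
        ((2 * n + 1).factorial : ℂ)
        = (((-1) ^ n * r ^ (2 * n + 1) * Real.cos ((2 * n + 1) * θ) /
              (2 * n + 1).factorial : ℝ) : ℂ)
          + (((-1) ^ n * r ^ (2 * n + 1) * Real.sin ((2 * n + 1) * θ) /
              (2 * n + 1).factorial : ℝ) : ℂ) * Complex.I := by
      rw [mul_pow, ← Complex.exp_nat_mul,
        show ((2 * n + 1 : ℕ) : ℂ) * (θ * Complex.I) = (((2 * n + 1 : ℕ) * θ : ℝ) : ℂ) * Complex.I
          by push_cast; ring,
        Complex.exp_mul_I, ← Complex.ofReal_cos, ← Complex.ofReal_sin]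
      push_cast
      ring
    rw [Complex.reCLM_apply, e1]
    simp only [Complex.add_re, Complex.ofReal_re, Complex.mul_I_re, Complex.ofReal_im, neg_zero,
      add_zero]
  have hsum : (Complex.sin ((r : ℂ) * Complex.exp (θ * Complex.I))).re
      = Real.sin (r * Real.cos θ) * Real.cosh (r * Real.sin θ) := by
    rw [show (r : ℂ) * Complex.exp (θ * Complex.I)
        = ((r * Real.cos θ : ℝ) : ℂ) + ((r * Real.sin θ : ℝ) : ℂ) * Complex.I by
      rw [Complex.exp_mul_I, ← Complex.ofReal_cos, ← Complex.ofReal_sin]; push_cast; ring,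
      Complex.sin_add_mul_I]
    rw [← Complex.ofReal_sin, ← Complex.ofReal_cos, ← Complex.ofReal_sinh, ← Complex.ofReal_cosh,
      ← Complex.ofReal_mul, ← Complex.ofReal_mul]
    simp only [Complex.add_re, Complex.ofReal_re, Complex.mul_I_re, Complex.ofReal_im, neg_zero,
      add_zero]
  simpa only [hterm, Complex.reCLM_apply, hsum] using h

lemma fresnel_linear_le_rpow_add {α b : ℝ} (c : ℝ) (hα : 1 < α) (hc : 0 ≤ c) (hb : 0 < b) :
    ∃ M : ℝ, 0 ≤ M ∧ ∀ y : ℝ, 0 ≤ y → c * y ≤ b * y ^ α + M := by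
  set Y : ℝ := (c / b) ^ (1 / (α - 1)) with hY
  have hY0 : 0 ≤ Y := Real.rpow_nonneg (div_nonneg hc hb.le) _
  refine ⟨c * Y, mul_nonneg hc hY0, fun y hy => ?_⟩
  rcases le_or_gt y Y with h | h
  · have h1 : c * y ≤ c * Y := mul_le_mul_of_nonneg_left h hc
    have h2 : 0 ≤ b * y ^ α := mul_nonneg hb.le (Real.rpow_nonneg hy _)
    linarith
  · have hy0 : 0 < y := lt_of_le_of_lt hY0 h
    have hne : α - 1 ≠ 0 := by linarith
    have hYpow : Y ^ (α - 1) = c / b := by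
      rw [hY, ← Real.rpow_mul (div_nonneg hc hb.le), one_div_mul_cancel hne, Real.rpow_one]
    have h2 : Y ^ (α - 1) ≤ y ^ (α - 1) := Real.rpow_le_rpow hY0 h.le (by linarith)
    have h3 : c / b ≤ y ^ (α - 1) := hYpow ▸ h2
    have h4 : y ^ α = y * y ^ (α - 1) := by
      nth_rewrite 1 [show α = 1 + (α - 1) by ring]
      rw [Real.rpow_add hy0, Real.rpow_one]
    have h5 : b * y * (c / b) ≤ b * y * y ^ (α - 1) :=
      mul_le_mul_of_nonneg_left h3 (mul_nonneg hb.le hy0.le)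
    have h6 : b * y * (c / b) = c * y := by field_simp
    have h7 : b * y ^ α = b * y * y ^ (α - 1) := by rw [h4]; ring
    have h8 : 0 ≤ c * Y := mul_nonneg hc hY0
    linarith

lemma fresnel_contOn_rpow (c : ℝ) : ContinuousOn (fun y : ℝ => y ^ c) (Ioi (0 : ℝ)) :=
  fun y hy => (Real.continuousAt_rpow_const y c (Or.inl (ne_of_gt hy))).continuousWithinAt

lemma fresnel_integrable_dom {α t : ℝ} (c : ℝ) (hα : 1 < α) (ht : 0 < t) (hc : 0 ≤ c) :
    IntegrableOn (fun y : ℝ => Real.exp (-t * y ^ α) * y ^ (α - 1) * Real.exp (c * y))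
      (Ioi (0 : ℝ)) := by
  obtain ⟨M, hM0, hM⟩ := fresnel_linear_le_rpow_add (b := t / 2) c hα hc (by linarith)
  have hbase : IntegrableOn (fun y : ℝ => y ^ (α - 1) * Real.exp (-(t / 2) * y ^ α)) (Ioi 0) :=
    integrableOn_rpow_mul_exp_neg_mul_rpow (by linarith) (by linarith) (by linarith)
  have hgint : IntegrableOn
      (fun y : ℝ => Real.exp M * (y ^ (α - 1) * Real.exp (-(t / 2) * y ^ α))) (Ioi 0) :=
    hbase.const_mul _
  refine Integrable.mono' hgint ?_ ?_
  · refine ContinuousOn.aestronglyMeasurable ?_ measurableSet_Ioi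
    refine ContinuousOn.mul (ContinuousOn.mul ?_ (fresnel_contOn_rpow _)) ?_
    · exact Real.continuous_exp.comp_continuousOn
        (continuousOn_const.mul (fresnel_contOn_rpow α))
    · exact (Real.continuous_exp.comp (continuous_const.mul continuous_id)).continuousOn
  · rw [ae_restrict_iff' measurableSet_Ioi]
    refine ae_of_all _ fun y hy => ?_
    have hy0 : (0 : ℝ) < y := hy
    have hynn : 0 ≤ y ^ (α - 1) := Real.rpow_nonneg hy0.le _
    rw [Real.norm_eq_abs, abs_of_nonneg (by positivity)]
    have key : Real.exp (-t * y ^ α) * Real.exp (c * y)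
        ≤ Real.exp M * Real.exp (-(t / 2) * y ^ α) := by
      rw [← Real.exp_add, ← Real.exp_add]
      apply Real.exp_le_exp.2
      have := hM y hy0.le
      linarith
    calc Real.exp (-t * y ^ α) * y ^ (α - 1) * Real.exp (c * y)
        = Real.exp (-t * y ^ α) * Real.exp (c * y) * y ^ (α - 1) := by ring
      _ ≤ Real.exp M * Real.exp (-(t / 2) * y ^ α) * y ^ (α - 1) :=
          mul_le_mul_of_nonneg_right key hynn
      _ = Real.exp M * (y ^ (α - 1) * Real.exp (-(t / 2) * y ^ α)) := by ring

lemma fresnel_term_eq (α t x : ℝ) (hα : 1 < α) (ht : 0 < t) (hx : x ≠ 0) (n : ℕ) :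
    1 / (α * π * t ^ (1 / α)) *
      ((x / t ^ (1 / α)) ^ (2 * n) * (Real.Gamma ((2 * n + 1) / α) / (2 * n).factorial) *
        Real.sin (π * (2 * n + 1) * (α + 1) / (2 * α)))
    = α * t / (π * x) *
      ((-1) ^ n * x ^ (2 * n + 1) * Real.cos ((2 * n + 1) * (π / (2 * α))) /
          ((2 * n + 1).factorial : ℝ) *
        (t ^ (-(α - 1 + ((2 * n + 1 : ℕ) : ℝ) + 1) / α) * (1 / α) *
          Real.Gamma ((α - 1 + ((2 * n + 1 : ℕ) : ℝ) + 1) / α))) := by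
  have hα0 : (0 : ℝ) < α := by linarith
  have hαne : α ≠ 0 := ne_of_gt hα0
  have hπ : (0 : ℝ) < π := Real.pi_pos
  have hT : (0 : ℝ) < t ^ (1 / α) := Real.rpow_pos_of_pos ht _
  have hm : ((2 * n + 1 : ℕ) : ℝ) = 2 * (n : ℝ) + 1 := by push_cast; ring
  have hsin : Real.sin (π * (2 * n + 1) * (α + 1) / (2 * α))
      = (-1) ^ n * Real.cos ((2 * n + 1) * (π / (2 * α))) := by
    rw [show π * (2 * (n : ℝ) + 1) * (α + 1) / (2 * α)
        = ((2 * (n : ℝ) + 1) * (π / (2 * α)) + π / 2) + n * π by field_simp; ring,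
      Real.sin_add_nat_mul_pi, Real.sin_add_pi_div_two]
  have hΓ : Real.Gamma ((α - 1 + ((2 * n + 1 : ℕ) : ℝ) + 1) / α)
      = ((2 * (n : ℝ) + 1) / α) * Real.Gamma ((2 * n + 1) / α) := by
    have e : (α - 1 + ((2 * n + 1 : ℕ) : ℝ) + 1) / α = (2 * (n : ℝ) + 1) / α + 1 := by
      rw [hm]; field_simp; ring
    rw [e, Real.Gamma_add_one (ne_of_gt (div_pos (by positivity) hα0))]
  have hpow : t ^ (-(α - 1 + ((2 * n + 1 : ℕ) : ℝ) + 1) / α)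
      = t⁻¹ * ((t ^ (1 / α)) ^ (2 * n + 1 : ℕ))⁻¹ := by
    have e1 : (t ^ (1 / α)) ^ (2 * n + 1 : ℕ) = t ^ (((2 * n + 1 : ℕ) : ℝ) / α) := by
      rw [← Real.rpow_natCast (t ^ (1 / α)) (2 * n + 1), ← Real.rpow_mul ht.le]
      congr 1
      field_simp
    rw [e1, ← Real.rpow_neg_one t, ← Real.rpow_neg ht.le, ← Real.rpow_add ht]
    congr 1
    rw [hm]; field_simp; ring
  have hfac : ((2 * n + 1).factorial : ℝ) = (2 * (n : ℝ) + 1) * ((2 * n).factorial : ℝ) := by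
    rw [show 2 * n + 1 = (2 * n) + 1 from rfl, Nat.factorial_succ]
    push_cast; ring
  have hfacne : ((2 * n).factorial : ℝ) ≠ 0 := by
    exact_mod_cast (Nat.factorial_ne_zero (2 * n))
  rw [hsin, hΓ, hpow, hfac]
  have hTpow : (0 : ℝ) < (t ^ (1 / α)) ^ (2 * n + 1 : ℕ) := pow_pos hT _
  field_simp
  rw [div_pow, pow_succ (t ^ (1 / α)) (2 * n), pow_succ x (2 * n)]
  field_simp

/-- For `α > 1`, `t > 0` and `x ≠ 0`, the symmetric Fresnel
pseudo-density admits the Weibull probabilistic representation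
`u_{2α}(x,t) = (α t/(π x)) ∫_0^∞ e^{-t y^α} y^{α-1}
  sin(x y cos(π/(2α))) cosh(x y sin(π/(2α))) dy`. -/
theorem fresnelDensity_weibull_repr (α t x : ℝ) (hα : 1 < α) (ht : 0 < t)
    (hx : x ≠ 0) :
    fresnelDensity α x t =
      (α * t / (π * x)) *
        ∫ y in Ioi (0 : ℝ), Real.exp (-t * y ^ α) * y ^ (α - 1) *
          Real.sin (x * y * Real.cos (π / (2 * α))) *
          Real.cosh (x * y * Real.sin (π / (2 * α))) := by
  have hα0 : (0 : ℝ) < α := by linarith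
  set θ : ℝ := π / (2 * α) with hθ
  set F : ℕ → ℝ → ℝ := fun n y =>
    Real.exp (-t * y ^ α) * y ^ (α - 1) *
      ((-1) ^ n * (x * y) ^ (2 * n + 1) * Real.cos ((2 * n + 1) * θ) /
        ((2 * n + 1).factorial : ℝ)) with hF
  -- pointwise sum of the series
  have hpt : ∀ y : ℝ, HasSum (fun n => F n y)
      (Real.exp (-t * y ^ α) * y ^ (α - 1) *
        (Real.sin (x * y * Real.cos θ) * Real.cosh (x * y * Real.sin θ))) := fun y =>
    (fresnel_hasSum_sin_mul_cosh θ (x * y)).mul_left _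
  -- measurability
  have hmeas : ∀ n : ℕ, AEStronglyMeasurable (F n) (volume.restrict (Ioi 0)) := by
    intro n
    refine ContinuousOn.aestronglyMeasurable ?_ measurableSet_Ioi
    refine ContinuousOn.mul (ContinuousOn.mul ?_ (fresnel_contOn_rpow _)) ?_
    · exact Real.continuous_exp.comp_continuousOn
        (continuousOn_const.mul (fresnel_contOn_rpow α))
    · apply Continuous.continuousOn
      fun_prop
  -- the explicit form of F on Ioi 0
  have hq : ∀ n : ℕ, (-1 : ℝ) < α - 1 + ((2 * n + 1 : ℕ) : ℝ) := by
    intro n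
    have : (0 : ℝ) ≤ ((2 * n + 1 : ℕ) : ℝ) := Nat.cast_nonneg _
    linarith
  have hFeq : ∀ n : ℕ, ∀ y ∈ Ioi (0 : ℝ),
      F n y = ((-1) ^ n * x ^ (2 * n + 1) * Real.cos ((2 * n + 1) * θ) /
          ((2 * n + 1).factorial : ℝ)) *
        (y ^ (α - 1 + ((2 * n + 1 : ℕ) : ℝ)) * Real.exp (-t * y ^ α)) := by
    intro n y hy
    have hy0 : (0 : ℝ) < y := hy
    have e1 : y ^ (α - 1 + ((2 * n + 1 : ℕ) : ℝ)) = y ^ (α - 1) * y ^ (2 * n + 1 : ℕ) := by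
      rw [Real.rpow_add hy0, Real.rpow_natCast]
    simp only [hF]
    rw [e1, mul_pow]
    ring
  have hInt : ∀ n : ℕ, IntegrableOn (F n) (Ioi 0) := by
    intro n
    exact IntegrableOn.congr_fun
      ((integrableOn_rpow_mul_exp_neg_mul_rpow (hq n) hα0 ht).const_mul _)
      (fun y hy => (hFeq n y hy).symm) measurableSet_Ioi
  have hIntVal : ∀ n : ℕ, ∫ y in Ioi 0, F n y
      = ((-1) ^ n * x ^ (2 * n + 1) * Real.cos ((2 * n + 1) * θ) /
          ((2 * n + 1).factorial : ℝ)) *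
        (t ^ (-(α - 1 + ((2 * n + 1 : ℕ) : ℝ) + 1) / α) * (1 / α) *
          Real.Gamma ((α - 1 + ((2 * n + 1 : ℕ) : ℝ) + 1) / α)) := by
    intro n
    rw [setIntegral_congr_fun measurableSet_Ioi (hFeq n), integral_const_mul,
      integral_rpow_mul_exp_neg_mul_rpow hα0 (hq n) ht]
  -- Tonelli bound
  have hinj : Function.Injective (fun n : ℕ => 2 * n + 1) := fun a b h => by simp only at h; omega
  have hfin : (∑' n : ℕ, ∫⁻ y in Ioi 0, ‖F n y‖₊ ∂volume) ≠ ⊤ := by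
    have hdom := fresnel_integrable_dom (α := α) (t := t) |x| hα ht (abs_nonneg x)
    have hbnd : ∀ y ∈ Ioi (0 : ℝ), (∑' n : ℕ, (‖F n y‖₊ : ENNReal))
        ≤ ENNReal.ofReal (Real.exp (-t * y ^ α) * y ^ (α - 1) * Real.exp (|x| * y)) := by
      intro y hy
      have hy0 : (0 : ℝ) < y := hy
      set r : ℝ := |x| * y with hr
      have hr0 : 0 ≤ r := mul_nonneg (abs_nonneg x) hy0.le
      set A : ℝ := Real.exp (-t * y ^ α) * y ^ (α - 1) with hA
      have hA0 : 0 ≤ A := mul_nonneg (Real.exp_pos _).le (Real.rpow_nonneg hy0.le _)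
      set g : ℕ → ℝ := fun n => A * (r ^ (2 * n + 1) / ((2 * n + 1).factorial : ℝ)) with hg
      have hg0 : ∀ n, 0 ≤ g n := fun n => by
        have : 0 ≤ r ^ (2 * n + 1) / ((2 * n + 1).factorial : ℝ) := by positivity
        exact mul_nonneg hA0 this
      have hs1 : Summable (fun n : ℕ => r ^ (2 * n + 1) / ((2 * n + 1).factorial : ℝ)) :=
        (Real.summable_pow_div_factorial r).comp_injective hinj
      have hgs : Summable g := hs1.mul_left A
      have hFg : ∀ n : ℕ, ‖F n y‖ ≤ g n := by
        intro n
        have e2 : ‖F n y‖ = A * (r ^ (2 * n + 1) * |Real.cos ((2 * n + 1) * θ)| /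
            ((2 * n + 1).factorial : ℝ)) := by
          rw [hF, Real.norm_eq_abs, abs_mul, abs_mul, abs_div, abs_mul, abs_mul, abs_pow,
            abs_pow, abs_neg, abs_one, one_pow, one_mul, abs_mul,
            abs_of_nonneg (Real.exp_pos _).le,
            abs_of_nonneg (Real.rpow_nonneg hy0.le _), abs_of_nonneg hy0.le, Nat.abs_cast]
        rw [e2, hg]
        have hcos : |Real.cos ((2 * n + 1) * θ)| ≤ 1 := Real.abs_cos_le_one _
        have hfc : (0 : ℝ) < ((2 * n + 1).factorial : ℝ) := by positivity
        have h2 : r ^ (2 * n + 1) * |Real.cos ((2 * n + 1) * θ)| ≤ r ^ (2 * n + 1) := by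
          nlinarith [pow_nonneg hr0 (2 * n + 1), Real.abs_cos_le_one ((2 * n + 1) * θ),
            abs_nonneg (Real.cos ((2 * n + 1) * θ))]
        have h1 : r ^ (2 * n + 1) * |Real.cos ((2 * n + 1) * θ)| /
            ((2 * n + 1).factorial : ℝ) ≤ r ^ (2 * n + 1) / ((2 * n + 1).factorial : ℝ) :=
          (div_le_div_iff_of_pos_right hfc).2 h2
        exact mul_le_mul_of_nonneg_left h1 hA0
      have hts : (∑' n : ℕ, r ^ (2 * n + 1) / ((2 * n + 1).factorial : ℝ)) ≤ Real.exp r := by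
        have hexp : Real.exp r = ∑' k : ℕ, r ^ k / (k.factorial : ℝ) := by
          rw [Real.exp_eq_exp_ℝ, NormedSpace.exp_eq_tsum_div]
        rw [hexp]
        exact Summable.tsum_le_tsum_of_inj (fun n : ℕ => 2 * n + 1) hinj
          (fun c _ => by positivity) (fun n => le_rfl) hs1
          (Real.summable_pow_div_factorial r)
      have hsum_le : (∑' n, g n) ≤ A * Real.exp r := by
        rw [hg, tsum_mul_left]
        exact mul_le_mul_of_nonneg_left hts hA0
      calc (∑' n : ℕ, (‖F n y‖₊ : ENNReal))
          ≤ ∑' n : ℕ, ENNReal.ofReal (g n) := by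
            refine ENNReal.tsum_le_tsum fun n => ?_
            rw [← enorm_eq_nnnorm, ← ofReal_norm]
            exact ENNReal.ofReal_le_ofReal (hFg n)
        _ = ENNReal.ofReal (∑' n, g n) := (ENNReal.ofReal_tsum_of_nonneg hg0 hgs).symm
        _ ≤ ENNReal.ofReal (Real.exp (-t * y ^ α) * y ^ (α - 1) * Real.exp (|x| * y)) :=
            ENNReal.ofReal_le_ofReal (by rw [← hA, ← hr]; exact hsum_le)
    have e1 : (∑' n : ℕ, ∫⁻ y in Ioi 0, ‖F n y‖₊ ∂volume)
        = ∫⁻ y in Ioi 0, (∑' n : ℕ, (‖F n y‖₊ : ENNReal)) ∂volume :=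
      (lintegral_tsum fun n => (hmeas n).enorm).symm
    rw [e1]
    have h2 : (∫⁻ y in Ioi 0, (∑' n : ℕ, (‖F n y‖₊ : ENNReal)) ∂volume)
        ≤ ∫⁻ y in Ioi 0,
            ENNReal.ofReal (Real.exp (-t * y ^ α) * y ^ (α - 1) * Real.exp (|x| * y)) ∂volume :=
      lintegral_mono_ae ((ae_restrict_iff' measurableSet_Ioi).2 (ae_of_all _ hbnd))
    have h3 : (∫⁻ y in Ioi 0,
        ENNReal.ofReal (Real.exp (-t * y ^ α) * y ^ (α - 1) * Real.exp (|x| * y)) ∂volume) < ⊤ :=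
      lt_of_le_of_lt (lintegral_ofReal_le_lintegral_enorm _) hdom.2
    exact (lt_of_le_of_lt h2 h3).ne
  have hswap : (∫ y in Ioi 0, (∑' n : ℕ, F n y)) = ∑' n : ℕ, ∫ y in Ioi 0, F n y :=
    integral_tsum hmeas hfin
  calc fresnelDensity α x t
      = ∑' n : ℕ, (1 / (α * π * t ^ (1 / α)) *
          ((x / t ^ (1 / α)) ^ (2 * n) * (Real.Gamma ((2 * n + 1) / α) / (2 * n).factorial) *
            Real.sin (π * (2 * n + 1) * (α + 1) / (2 * α)))) := by
        rw [fresnelDensity, tsum_mul_left]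
    _ = ∑' n : ℕ, (α * t / (π * x) *
          (((-1) ^ n * x ^ (2 * n + 1) * Real.cos ((2 * n + 1) * θ) /
              ((2 * n + 1).factorial : ℝ)) *
            (t ^ (-(α - 1 + ((2 * n + 1 : ℕ) : ℝ) + 1) / α) * (1 / α) *
              Real.Gamma ((α - 1 + ((2 * n + 1 : ℕ) : ℝ) + 1) / α)))) :=
        tsum_congr fun n => fresnel_term_eq α t x hα ht hx n
    _ = α * t / (π * x) * ∑' n : ℕ,
          (((-1) ^ n * x ^ (2 * n + 1) * Real.cos ((2 * n + 1) * θ) /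
              ((2 * n + 1).factorial : ℝ)) *
            (t ^ (-(α - 1 + ((2 * n + 1 : ℕ) : ℝ) + 1) / α) * (1 / α) *
              Real.Gamma ((α - 1 + ((2 * n + 1 : ℕ) : ℝ) + 1) / α))) := tsum_mul_left
    _ = α * t / (π * x) * ∑' n : ℕ, ∫ y in Ioi 0, F n y := by
        rw [tsum_congr fun n => (hIntVal n).symm]
    _ = α * t / (π * x) * ∫ y in Ioi 0, (∑' n : ℕ, F n y) := by rw [hswap]
    _ = α * t / (π * x) *
        ∫ y in Ioi (0 : ℝ), Real.exp (-t * y ^ α) * y ^ (α - 1) *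
          Real.sin (x * y * Real.cos θ) * Real.cosh (x * y * Real.sin θ) := by
        congr 1
        refine integral_congr_ae (ae_of_all _ fun y => ?_)
        exact ((hpt y).tsum_eq).trans (by ring)
end

section
/- For t > 0 and all x ∈ ℝ, the symmetric Fresnel pseudo-density of order α = 2 satisfies u_4(x,t) = (1/(2√(π t))) · cos(x²/(4t) − π/4). -/
open Real


lemma gamma_nat_add_half (n : ℕ) :
    Real.Gamma ((n : ℝ) + 1 / 2) = Real.sqrt π * (2 * n).factorial / (4 ^ n * n.factorial) := by
  induction n with
  | zero =>
    rw [show ((0:ℕ):ℝ) + 1/2 = 1/2 by norm_num, Real.Gamma_one_half_eq]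
    simp
  | succ n ih =>
    have hne : (n : ℝ) + 1 / 2 ≠ 0 := by positivity
    have h : ((n + 1 : ℕ) : ℝ) + 1 / 2 = ((n : ℝ) + 1 / 2) + 1 := by push_cast; ring
    rw [h, Real.Gamma_add_one hne, ih]
    have h2 : 2 * (n + 1) = (2 * n + 1) + 1 := by ring
    rw [h2, Nat.factorial_succ, Nat.factorial_succ, Nat.factorial_succ]
    have h4 : (4 : ℝ) ^ n ≠ 0 := by positivity
    have hf : ((n.factorial : ℝ)) ≠ 0 := Nat.cast_ne_zero.mpr n.factorial_ne_zero
    push_cast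
    field_simp
    ring

lemma sin34 : Real.sin (3 * π / 4) = Real.sqrt 2 / 2 := by
  rw [show 3 * π / 4 = π - π / 4 by ring, Real.sin_pi_sub, Real.sin_pi_div_four]

lemma sin_even_arg (m : ℕ) :
    Real.sin (3 * π / 4 + (3 * m : ℕ) * π) = (-1) ^ m * (Real.sqrt 2 / 2) := by
  rw [Real.sin_add_nat_mul_pi, sin34, pow_mul]
  norm_num

lemma sin_odd_arg (m : ℕ) :
    Real.sin (π / 4 + (3 * m + 2 : ℕ) * π) = (-1) ^ m * (Real.sqrt 2 / 2) := by
  rw [Real.sin_add_nat_mul_pi, Real.sin_pi_div_four, pow_add, pow_mul]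
  norm_num

/-- For `t > 0` and all `x ∈ ℝ`, the symmetric Fresnel
pseudo-density of order `α = 2` satisfies
`u_4(x,t) = (1/(2√(π t))) · cos(x²/(4t) − π/4)`. -/
theorem fresnelDensity_two (t x : ℝ) (ht : 0 < t) :
    fresnelDensity 2 x t =
      (1 / (2 * Real.sqrt (π * t))) * Real.cos (x ^ 2 / (4 * t) - π / 4) := by
  have hts : Real.sqrt t ≠ 0 := by positivity
  have hps : Real.sqrt π ≠ 0 := by positivity
  set z : ℝ := x ^ 2 / (4 * t) with hz
  set g : ℕ → ℝ := fun k =>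
    (x / t ^ (1 / (2:ℝ))) ^ (2 * k) *
      (Real.Gamma ((2 * k + 1) / 2) / (2 * k).factorial) *
      Real.sin (π * (2 * k + 1) * (2 + 1) / (2 * 2)) with hg
  have hrt : t ^ (1 / (2:ℝ)) = Real.sqrt t := (Real.sqrt_eq_rpow t).symm
  have hsq : Real.sqrt t ^ 2 = t := Real.sq_sqrt ht.le
  -- even terms
  have he : HasSum (fun m => g (2 * m)) (Real.sqrt π * (Real.sqrt 2 / 2) * Real.cos z) := by
    have h0 := (Real.hasSum_cos z).mul_left (Real.sqrt π * (Real.sqrt 2 / 2))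
    refine h0.congr_fun fun m => ?_
    have harg : π * (2 * ((2 * m : ℕ) : ℝ) + 1) * (2 + 1) / (2 * 2)
        = 3 * π / 4 + (3 * m : ℕ) * π := by push_cast; ring
    have hgamma : ((2 : ℝ) * ((2 * m : ℕ) : ℝ) + 1) / 2 = ((2 * m : ℕ) : ℝ) + 1 / 2 := by
      push_cast; ring
    simp only [hg, harg, hgamma, sin_even_arg, gamma_nat_add_half, hrt]
    have hpow : (x / Real.sqrt t) ^ (2 * (2 * m)) = (x ^ 2 / t) ^ (2 * m) := by
      rw [pow_mul, div_pow, hsq]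
    rw [hpow]
    have hzpow : z ^ (2 * m) = (x ^ 2 / t) ^ (2 * m) / 4 ^ (2 * m) := by
      rw [hz, show x ^ 2 / (4 * t) = (x ^ 2 / t) / 4 by ring, div_pow]
    rw [hzpow]
    have hf1 : ((2 * (2 * m)).factorial : ℝ) ≠ 0 := Nat.cast_ne_zero.mpr (Nat.factorial_ne_zero _)
    have hf2 : ((2 * m).factorial : ℝ) ≠ 0 := Nat.cast_ne_zero.mpr (Nat.factorial_ne_zero _)
    have h4 : (4 : ℝ) ^ (2 * m) ≠ 0 := by positivity
    field_simp
  -- odd terms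
  have ho : HasSum (fun m => g (2 * m + 1)) (Real.sqrt π * (Real.sqrt 2 / 2) * Real.sin z) := by
    have h0 := (Real.hasSum_sin z).mul_left (Real.sqrt π * (Real.sqrt 2 / 2))
    refine h0.congr_fun fun m => ?_
    have harg : π * (2 * ((2 * m + 1 : ℕ) : ℝ) + 1) * (2 + 1) / (2 * 2)
        = π / 4 + (3 * m + 2 : ℕ) * π := by push_cast; ring
    have hgamma : ((2 : ℝ) * ((2 * m + 1 : ℕ) : ℝ) + 1) / 2 = ((2 * m + 1 : ℕ) : ℝ) + 1 / 2 := by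
      push_cast; ring
    simp only [hg, harg, hgamma, sin_odd_arg, gamma_nat_add_half, hrt]
    have hpow : (x / Real.sqrt t) ^ (2 * (2 * m + 1)) = (x ^ 2 / t) ^ (2 * m + 1) := by
      rw [pow_mul, div_pow, hsq]
    rw [hpow]
    have hzpow : z ^ (2 * m + 1) = (x ^ 2 / t) ^ (2 * m + 1) / 4 ^ (2 * m + 1) := by
      rw [hz, show x ^ 2 / (4 * t) = (x ^ 2 / t) / 4 by ring, div_pow]
    rw [hzpow]
    have hf1 : ((2 * (2 * m + 1)).factorial : ℝ) ≠ 0 :=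
      Nat.cast_ne_zero.mpr (Nat.factorial_ne_zero _)
    have hf2 : ((2 * m + 1).factorial : ℝ) ≠ 0 := Nat.cast_ne_zero.mpr (Nat.factorial_ne_zero _)
    have h4 : (4 : ℝ) ^ (2 * m + 1) ≠ 0 := by positivity
    field_simp
  have hsum : HasSum g (Real.sqrt π * (Real.sqrt 2 / 2) * Real.cos z
      + Real.sqrt π * (Real.sqrt 2 / 2) * Real.sin z) := he.even_add_odd ho
  have htsum : (∑' k : ℕ, g k)
      = Real.sqrt π * (Real.sqrt 2 / 2) * Real.cos z
      + Real.sqrt π * (Real.sqrt 2 / 2) * Real.sin z := hsum.tsum_eq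
  have hfd : fresnelDensity 2 x t = (1 / (2 * π * t ^ (1 / (2:ℝ)))) * ∑' k : ℕ, g k := by
    rw [fresnelDensity]
  rw [hfd, htsum, hrt, Real.cos_sub, Real.cos_pi_div_four, Real.sin_pi_div_four,
    Real.sqrt_mul Real.pi_pos.le]
  have hpi : Real.sqrt π * Real.sqrt π = π := Real.mul_self_sqrt Real.pi_pos.le
  have hpi0 : π ≠ 0 := Real.pi_ne_zero
  field_simp
  linear_combination (Real.cos z + Real.sin z) * hpi
end

section
/- For all t > 0 and all real x ≠ 0, one has (1/(π x)) · ∫_0^∞ sin(x √(y/(2t))) · cosh(x √(y/(2t))) · e^{-y} dy = (1/(2√(π t))) · cos(x²/(4t) − π/4). -/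
open Real MeasureTheory Set

section Aux


open Real MeasureTheory Set Filter Complex

noncomputable section

lemma re_aux (k : ℂ) (x : ℝ) : (-(x:ℂ)^2 + k*x).re = -x^2 + k.re * x := by
  simp [Complex.add_re, Complex.neg_re, ← Complex.ofReal_pow]

lemma norm_aux (k : ℂ) (x : ℝ) :
    ‖Complex.exp (-(x:ℂ)^2 + k*x)‖ = Real.exp (-x^2 + k.re*x) := by
  rw [Complex.norm_exp, re_aux]

lemma tendsto_cexp_sq_lin_atTop (k : ℂ) :
    Tendsto (fun x : ℝ => Complex.exp (-(x:ℂ)^2 + k*x)) atTop (nhds 0) := by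
  rw [tendsto_zero_iff_norm_tendsto_zero]
  simp_rw [norm_aux]
  have hbound : Tendsto (fun x : ℝ => Real.exp (k.re^2/2) * Real.exp (-(1/2:ℝ)*x^2)) atTop (nhds 0) := by
    rw [show (0:ℝ) = Real.exp (k.re^2/2) * 0 by ring]
    refine Tendsto.const_mul _ ?_
    exact Real.tendsto_exp_atBot.comp
      ((tendsto_pow_atTop two_ne_zero).const_mul_atTop_of_neg (by norm_num))
  refine squeeze_zero (fun x => (Real.exp_pos _).le) (fun x => ?_) hbound
  rw [← Real.exp_add]
  exact Real.exp_le_exp.2 (by nlinarith [sq_nonneg (x - k.re)])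

lemma tendsto_cexp_sq_lin_atBot (k : ℂ) :
    Tendsto (fun x : ℝ => Complex.exp (-(x:ℂ)^2 + k*x)) atBot (nhds 0) := by
  have := (tendsto_cexp_sq_lin_atTop (-k)).comp tendsto_neg_atBot_atTop
  refine this.congr fun x => ?_
  simp only [Function.comp]
  push_cast
  ring_nf

lemma integrable_cexp_sq_lin (k : ℂ) :
    Integrable fun x : ℝ => Complex.exp (-(x:ℂ)^2 + k*x) := by
  have h := integrable_cexp_quadratic' (b := -1) (by simp) k 0
  simpa [neg_one_mul] using h

end

section part2
open Complex

lemma integrable_mul_cexp_sq_lin (k : ℂ) :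
    Integrable fun x : ℝ => (x:ℂ) * Complex.exp (-(x:ℂ)^2 + k*x) := by
  have hg : Integrable (fun x : ℝ =>
      Real.exp (k.re^2/2) * |x * Real.exp (-(1/2:ℝ)*x^2)|) :=
    ((integrable_mul_exp_neg_mul_sq (by norm_num : (0:ℝ) < 1/2)).abs).const_mul _
  refine hg.mono' ?_ ?_
  · apply Continuous.aestronglyMeasurable
    exact Complex.continuous_ofReal.mul (Complex.continuous_exp.comp
      (((Complex.continuous_ofReal.pow 2).neg).add (continuous_const.mul Complex.continuous_ofReal)))
  · refine Eventually.of_forall fun x => ?_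
    rw [norm_mul, norm_aux, Complex.norm_real, abs_mul,
      _root_.abs_of_nonneg (Real.exp_pos _).le, Real.norm_eq_abs]
    have hb : Real.exp (-x^2 + k.re*x) ≤ Real.exp (k.re^2/2) * Real.exp (-(1/2:ℝ)*x^2) := by
      rw [← Real.exp_add]
      exact Real.exp_le_exp.2 (by nlinarith [sq_nonneg (x - k.re)])
    calc |x| * Real.exp (-x^2 + k.re*x)
        ≤ |x| * (Real.exp (k.re^2/2) * Real.exp (-(1/2:ℝ)*x^2)) :=
          mul_le_mul_of_nonneg_left hb (abs_nonneg x)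
      _ = Real.exp (k.re^2/2) * (|x| * Real.exp (-(1/2:ℝ)*x^2)) := by ring

lemma integral_cexp_sq_lin (k : ℂ) :
    ∫ x : ℝ, Complex.exp (-(x:ℂ)^2 + k*x) = (Real.sqrt π : ℂ) * Complex.exp (k^2/4) := by
  have h := integral_cexp_quadratic (b := -1) (by simp) k 0
  simp only [neg_one_mul, add_zero, zero_sub, neg_neg] at h
  rw [h]
  have e1 : (↑π / 1 : ℂ) ^ (1/2 : ℂ) = (Real.sqrt π : ℂ) := by
    rw [div_one, show ((1:ℂ)/2) = ((1/2:ℝ):ℂ) by norm_num,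
      ← Complex.ofReal_cpow Real.pi_pos.le, ← Real.sqrt_eq_rpow]
  have e2 : -(k^2/(4*(-1):ℂ)) = k^2/4 := by ring
  rw [e1, e2]

end part2

section part3
open Complex

lemma integral_mul_cexp_sq_lin (k : ℂ) :
    ∫ x : ℝ, (x:ℂ) * Complex.exp (-(x:ℂ)^2 + k*x)
      = (Real.sqrt π : ℂ) / 2 * k * Complex.exp (k^2/4) := by
  -- F x = (-1/2) e^{-x²+kx}, F' x = x e - (k/2) e
  set F : ℂ → ℂ := fun z => (-1/2 : ℂ) * Complex.exp (-z^2 + k*z) with hF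
  have hA : ∀ x : ℝ, HasDerivAt (fun y : ℝ => F y)
      ((x:ℂ) * Complex.exp (-(x:ℂ)^2 + k*x) - k/2 * Complex.exp (-(x:ℂ)^2 + k*x)) x := by
    intro x
    have inner : HasDerivAt (fun z : ℂ => -z^2 + k*z) (-(2*x) + k) (x:ℂ) := by
      have h := ((hasDerivAt_pow 2 (x:ℂ)).neg.add ((hasDerivAt_id (x:ℂ)).const_mul k))
      refine h.congr_deriv ?_
      norm_num
    have := (inner.cexp.const_mul (-1/2 : ℂ)).comp_ofReal
    convert this using 1
    ring
  have hint : Integrable (fun x : ℝ =>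
      (x:ℂ) * Complex.exp (-(x:ℂ)^2 + k*x) - k/2 * Complex.exp (-(x:ℂ)^2 + k*x)) :=
    (integrable_mul_cexp_sq_lin k).sub ((integrable_cexp_sq_lin k).const_mul _)
  have htop : Tendsto (fun x : ℝ => F x) atTop (nhds 0) := by
    rw [show (0:ℂ) = (-1/2 : ℂ) * 0 by ring]
    exact (tendsto_cexp_sq_lin_atTop k).const_mul _
  have hbot : Tendsto (fun x : ℝ => F x) atBot (nhds 0) := by
    rw [show (0:ℂ) = (-1/2 : ℂ) * 0 by ring]
    exact (tendsto_cexp_sq_lin_atBot k).const_mul _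
  have hIoi := MeasureTheory.integral_Ioi_of_hasDerivAt_of_tendsto'
      (f := fun y : ℝ => F y) (a := 0) (fun x _ => hA x) hint.integrableOn htop
  have hIic := MeasureTheory.integral_Iic_of_hasDerivAt_of_tendsto'
      (f := fun y : ℝ => F y) (a := 0) (fun x _ => hA x) hint.integrableOn hbot
  have hzero : ∫ x : ℝ, ((x:ℂ) * Complex.exp (-(x:ℂ)^2 + k*x)
      - k/2 * Complex.exp (-(x:ℂ)^2 + k*x)) = 0 := by
    rw [← intervalIntegral.integral_Iic_add_Ioi hint.integrableOn hint.integrableOn, hIic, hIoi]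
    ring
  have hsplit := MeasureTheory.integral_sub (integrable_mul_cexp_sq_lin k)
      ((integrable_cexp_sq_lin k).const_mul (k/2))
  rw [hsplit] at hzero
  rw [sub_eq_zero] at hzero
  rw [hzero, MeasureTheory.integral_const_mul, integral_cexp_sq_lin]
  ring

end part3

section part4
open Complex

lemma key_pointwise (c u : ℝ) :
    ((u * Real.sin (c*u) * Real.cosh (c*u) * Real.exp (-u^2) : ℝ) : ℂ)
      = ((u:ℂ) * Complex.exp (-(u:ℂ)^2 + (((1:ℂ)+I)*c)*u)
        + (u:ℂ) * Complex.exp (-(u:ℂ)^2 + (((-1:ℂ)+I)*c)*u)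
        - (u:ℂ) * Complex.exp (-(u:ℂ)^2 + (((1:ℂ)-I)*c)*u)
        - (u:ℂ) * Complex.exp (-(u:ℂ)^2 + (((-1:ℂ)-I)*c)*u)) / (4*I) := by
  have h4I : ∀ X : ℂ, X / (4*I) = -(I/4)*X := by
    intro X
    rw [div_eq_iff (by simp [Complex.I_ne_zero] : (4*(I:ℂ)) ≠ 0)]
    linear_combination X * Complex.I_sq
  rw [h4I]
  push_cast
  simp only [Complex.sin, Complex.cosh]
  have e1 : (-(u:ℂ)^2 + (((1:ℂ)+I)*c)*u) = ((c:ℂ)*u*I) + ((c:ℂ)*u + -(u:ℂ)^2) := by ring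
  have e2 : (-(u:ℂ)^2 + (((-1:ℂ)+I)*c)*u) = ((c:ℂ)*u*I) + (-((c:ℂ)*u) + -(u:ℂ)^2) := by ring
  have e3 : (-(u:ℂ)^2 + (((1:ℂ)-I)*c)*u) = -((c:ℂ)*u*I) + ((c:ℂ)*u + -(u:ℂ)^2) := by ring
  have e4 : (-(u:ℂ)^2 + (((-1:ℂ)-I)*c)*u) = -((c:ℂ)*u*I) + (-((c:ℂ)*u) + -(u:ℂ)^2) := by ring
  have e5 : -((c:ℂ)*u)*I = -((c:ℂ)*u*I) := by ring
  rw [e1, e2, e3, e4, e5]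
  simp only [Complex.exp_add, Complex.exp_neg]
  ring

end part4

section part5
open Complex

lemma integral_complex_ofReal' {f : ℝ → ℝ} :
    (∫ x : ℝ, ((f x : ℝ) : ℂ)) = ((∫ x : ℝ, f x : ℝ) : ℂ) := integral_ofReal

lemma integral_real_line (c : ℝ) :
    (∫ u : ℝ, u * Real.sin (c*u) * Real.cosh (c*u) * Real.exp (-u^2))
      = Real.sqrt π * c / 2 * (Real.cos (c^2/2) + Real.sin (c^2/2)) := by
  apply Complex.ofReal_injective
  rw [← integral_complex_ofReal']
  rw [MeasureTheory.integral_congr_ae (Filter.Eventually.of_forall fun u => key_pointwise c u)]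
  have i1 := integrable_mul_cexp_sq_lin (((1:ℂ)+I)*c)
  have i2 := integrable_mul_cexp_sq_lin (((-1:ℂ)+I)*c)
  have i3 := integrable_mul_cexp_sq_lin (((1:ℂ)-I)*c)
  have i4 := integrable_mul_cexp_sq_lin (((-1:ℂ)-I)*c)
  have i12 : Integrable (fun x : ℝ => (x:ℂ) * Complex.exp (-(x:ℂ)^2 + (((1:ℂ)+I)*c)*x)
      + (x:ℂ) * Complex.exp (-(x:ℂ)^2 + (((-1:ℂ)+I)*c)*x)) volume := i1.add i2
  have i123 : Integrable (fun x : ℝ => ((x:ℂ) * Complex.exp (-(x:ℂ)^2 + (((1:ℂ)+I)*c)*x)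
      + (x:ℂ) * Complex.exp (-(x:ℂ)^2 + (((-1:ℂ)+I)*c)*x))
      - (x:ℂ) * Complex.exp (-(x:ℂ)^2 + (((1:ℂ)-I)*c)*x)) volume := i12.sub i3
  rw [MeasureTheory.integral_div, MeasureTheory.integral_sub i123 i4,
    MeasureTheory.integral_sub i12 i3, MeasureTheory.integral_add i1 i2,
    integral_mul_cexp_sq_lin, integral_mul_cexp_sq_lin, integral_mul_cexp_sq_lin,
    integral_mul_cexp_sq_lin]
  have q1 : ((((1:ℂ)+I)*c)^2/4) = ((c^2/2 : ℝ):ℂ)*I := by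
    push_cast; linear_combination ((c:ℂ)^2/4) * Complex.I_sq
  have q2 : ((((-1:ℂ)+I)*c)^2/4) = -((c^2/2 : ℝ):ℂ)*I := by
    push_cast; linear_combination ((c:ℂ)^2/4) * Complex.I_sq
  have q3 : ((((1:ℂ)-I)*c)^2/4) = -((c^2/2 : ℝ):ℂ)*I := by
    push_cast; linear_combination ((c:ℂ)^2/4) * Complex.I_sq
  have q4 : ((((-1:ℂ)-I)*c)^2/4) = ((c^2/2 : ℝ):ℂ)*I := by
    push_cast; linear_combination ((c:ℂ)^2/4) * Complex.I_sq
  rw [q1, q2, q3, q4, Complex.exp_mul_I, show (-((c^2/2 : ℝ):ℂ)*I) = (-((c^2/2 : ℝ):ℂ))*I by ring,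
    Complex.exp_mul_I, Complex.cos_neg, Complex.sin_neg]
  rw [div_eq_iff (by simp [Complex.I_ne_zero] : (4*(I:ℂ)) ≠ 0)]
  simp only [← Complex.ofReal_cos, ← Complex.ofReal_sin]
  push_cast
  ring

end part5

section part6

lemma integral_Ioi_half (c : ℝ) :
    ∫ u in Ioi (0:ℝ), u * Real.sin (c*u) * Real.cosh (c*u) * Real.exp (-u^2)
      = Real.sqrt π * c / 4 * (Real.cos (c^2/2) + Real.sin (c^2/2)) := by
  have heven : ∀ u : ℝ, |u| * Real.sin (c*|u|) * Real.cosh (c*|u|) * Real.exp (-|u|^2)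
      = u * Real.sin (c*u) * Real.cosh (c*u) * Real.exp (-u^2) := by
    intro u
    rcases abs_cases u with ⟨h, _⟩ | ⟨h, _⟩
    · rw [h]
    · rw [h, mul_neg c u, Real.sin_neg, Real.cosh_neg, neg_sq]; ring
  have h2 := integral_comp_abs
    (f := fun u => u * Real.sin (c*u) * Real.cosh (c*u) * Real.exp (-u^2))
  simp only [heven] at h2
  rw [integral_real_line c] at h2
  linarith

end part6

end Aux

/-- For all `t > 0` and all real `x ≠ 0`,
`(1/(π x)) ∫_0^∞ sin(x √(y/(2t))) cosh(x √(y/(2t))) e^{-y} dy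
  = (1/(2√(π t))) cos(x²/(4t) − π/4)`. -/
theorem exp_weibull_integral_identity (t x : ℝ) (ht : 0 < t) (hx : x ≠ 0) :
    (1 / (π * x)) *
      ∫ y in Ioi (0 : ℝ), Real.sin (x * Real.sqrt (y / (2 * t))) *
        Real.cosh (x * Real.sqrt (y / (2 * t))) * Real.exp (-y) =
      (1 / (2 * Real.sqrt (π * t))) * Real.cos (x ^ 2 / (4 * t) - π / 4) := by
  have h2t : (0:ℝ) < 2*t := by linarith
  set c : ℝ := x / Real.sqrt (2*t) with hc
  have hsub := MeasureTheory.integral_comp_rpow_Ioi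
    (fun y => Real.sin (x * Real.sqrt (y / (2 * t))) *
      Real.cosh (x * Real.sqrt (y / (2 * t))) * Real.exp (-y)) (p := 2) two_ne_zero
  rw [← hsub]
  have hcong : ∀ u ∈ Ioi (0:ℝ),
      (|(2:ℝ)| * u ^ ((2:ℝ)-1)) • ((fun y => Real.sin (x * Real.sqrt (y / (2 * t))) *
        Real.cosh (x * Real.sqrt (y / (2 * t))) * Real.exp (-y)) (u ^ (2:ℝ)))
      = 2 * (u * Real.sin (c*u) * Real.cosh (c*u) * Real.exp (-u^2)) := by
    intro u hu
    have hu0 : (0:ℝ) < u := hu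
    have hr2 : u ^ (2:ℝ) = u^2 := by
      rw [show (2:ℝ) = ((2:ℕ):ℝ) by norm_num, Real.rpow_natCast]
    have hr1 : u ^ ((2:ℝ)-1) = u := by
      norm_num
    have hsqrt : Real.sqrt (u^2 / (2*t)) = u / Real.sqrt (2*t) := by
      rw [Real.sqrt_div (sq_nonneg u), Real.sqrt_sq hu0.le]
    have harg : x * (u / Real.sqrt (2*t)) = c * u := by
      rw [hc]; ring
    simp only [hr2, hr1, hsqrt, harg, smul_eq_mul]
    rw [_root_.abs_of_nonneg (by norm_num : (0:ℝ) ≤ 2)]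
    ring
  rw [MeasureTheory.setIntegral_congr_fun measurableSet_Ioi hcong,
    MeasureTheory.integral_const_mul, integral_Ioi_half c]
  have hθ : c^2/2 = x^2/(4*t) := by
    rw [hc, div_pow, Real.sq_sqrt h2t.le]
    field_simp
    ring
  rw [hθ, Real.cos_sub, Real.cos_pi_div_four, Real.sin_pi_div_four]
  -- final arithmetic
  have hπ : (0:ℝ) < π := Real.pi_pos
  have h1 : Real.sqrt (2*t) = Real.sqrt 2 * Real.sqrt t := Real.sqrt_mul (by norm_num) t
  have h2 : Real.sqrt (π*t) = Real.sqrt π * Real.sqrt t := Real.sqrt_mul hπ.le t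
  have h3 : Real.sqrt π * Real.sqrt π = π := Real.mul_self_sqrt hπ.le
  have h4 : Real.sqrt 2 * Real.sqrt 2 = 2 := Real.mul_self_sqrt (by norm_num)
  have h5 : (0:ℝ) < Real.sqrt π := Real.sqrt_pos.2 hπ
  have h6 : (0:ℝ) < Real.sqrt 2 := Real.sqrt_pos.2 (by norm_num)
  have h7 : (0:ℝ) < Real.sqrt t := Real.sqrt_pos.2 ht
  rw [hc, h1, h2]
  field_simp
  ring_nf
  linear_combination (8*(Real.cos (x^2*t⁻¹*(1/4)) + Real.sin (x^2*t⁻¹*(1/4)))) * h3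
    - (4*π*(Real.cos (x^2*t⁻¹*(1/4)) + Real.sin (x^2*t⁻¹*(1/4)))) * h4
end

section
/- Let α > 1, 0 < θ < 1 with αθ > 1, let t > 0 and x ∈ ℝ, x ≠ 0. Then (1/(α θ π t^{1/(αθ)})) ∑_{k=0}^∞ (x/t^{1/(αθ)})^{2k} · (Γ((2k+1)/(αθ))/(2k)!) · sin(π(2k+1)(α+1)/(2α)) = (α θ t/(π x)) · ∫_0^∞ e^{-t y^{αθ}} y^{αθ−1} sin(x y cos(π/(2α))) cosh(x y sin(π/(2α))) dy; i.e., the subordinated pseudo-density equals (1/(π x)) E[sin(x cos(π/(2α)) G) cosh(x sin(π/(2α)) G)] where G has Weibull density g_{αθ}(y; 1/t) = αθ t y^{αθ−1} exp(−t y^{αθ}). -/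
open Real MeasureTheory Set

open Filter
lemma my_sin_re (z : ℂ) : (Complex.sin z).re = Real.sin z.re * Real.cosh z.im := by
  rw [Complex.sin_eq]; simp [Complex.sin_ofReal_re]

lemma my_hasSum_sin_cosh (u φ : ℝ) :
    HasSum (fun k : ℕ => (-1) ^ k * u ^ (2 * k + 1) * Real.cos ((2 * (k:ℝ) + 1) * φ) /
      (2 * k + 1).factorial)
    (Real.sin (u * Real.cos φ) * Real.cosh (u * Real.sin φ)) := by
  have key := (Complex.hasSum_sin ((u : ℂ) * Complex.exp (φ * Complex.I))).mapL Complex.reCLM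
  have hterm : ∀ n : ℕ, (-1) ^ n * ((u:ℂ) * Complex.exp (↑φ * Complex.I)) ^ (2 * n + 1) /
      ((2 * n + 1).factorial : ℂ)
      = (((-1) ^ n * u ^ (2 * n + 1) / (2 * n + 1).factorial : ℝ) : ℂ) *
        Complex.exp ((((2 * (n:ℝ) + 1) * φ : ℝ)) * Complex.I) := by
    intro n
    rw [mul_pow, ← Complex.exp_nat_mul]
    push_cast
    ring
  convert key using 2 with n
  · simp only [Complex.reCLM_apply, hterm n, Complex.re_ofReal_mul,
      Complex.exp_ofReal_mul_I_re]
    ring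
  · rw [Complex.reCLM_apply, my_sin_re]
    congr 2
    · simp [Complex.exp_ofReal_mul_I_re]
    · simp [Complex.exp_mul_I, Complex.mul_im, Complex.cos_ofReal_re, Complex.sin_ofReal_re]

lemma my_Gamma_div_le {β : ℝ} (hβ : 1 < β) (m : ℕ) :
    Real.Gamma ((m : ℝ) / β + 1) ≤ (m.factorial : ℝ) ^ (1 / β) := by
  have hβ0 : 0 < β := lt_trans one_pos hβ
  have h1 : (1:ℝ) ∈ Ioi (0:ℝ) := by norm_num
  have h2 : ((m:ℝ) + 1) ∈ Ioi (0:ℝ) := by simp; positivity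
  have ha : (0:ℝ) ≤ 1 - 1 / β := by
    have : 1 / β < 1 := by rw [div_lt_one hβ0]; exact hβ
    linarith
  have hb : (0:ℝ) ≤ 1 / β := by positivity
  have key := Real.convexOn_log_Gamma.2 h1 h2 ha hb (by ring)
  simp only [smul_eq_mul, Function.comp_apply, mul_one] at key
  have harg' : 1 - 1 / β + 1 / β * ((m:ℝ) + 1) = (m:ℝ) / β + 1 := by field_simp; ring
  rw [harg'] at key
  rw [Real.Gamma_one, Real.log_one, mul_zero, zero_add, Real.Gamma_nat_eq_factorial] at key
  have hΓpos : 0 < Real.Gamma ((m:ℝ) / β + 1) := Real.Gamma_pos_of_pos (by positivity)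
  have hfpos : (0:ℝ) < (m.factorial : ℝ) := by positivity
  rw [Real.rpow_def_of_pos hfpos]
  calc Real.Gamma ((m:ℝ) / β + 1) = Real.exp (Real.log (Real.Gamma ((m:ℝ)/β + 1))) :=
        (Real.exp_log hΓpos).symm
    _ ≤ Real.exp (Real.log (m.factorial : ℝ) * (1 / β)) := by
        apply Real.exp_le_exp.mpr; rw [mul_comm]; exact key

lemma my_summable {β t x : ℝ} (hβ : 1 < β) (ht : 0 < t) :
    Summable (fun k : ℕ => |x| ^ (2 * k + 1) / (2 * k + 1).factorial *
      (t ^ (-(β + 2 * (k:ℝ) + 1) / β) * (1 / β)) * ((2 * k + 1).factorial : ℝ) ^ (1 / β)) := by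
  have hβ0 : 0 < β := lt_trans one_pos hβ
  set f : ℕ → ℝ := fun k => |x| ^ (2 * k + 1) / (2 * k + 1).factorial *
      (t ^ (-(β + 2 * (k:ℝ) + 1) / β) * (1 / β)) * ((2 * k + 1).factorial : ℝ) ^ (1 / β) with hf
  have hfpos : ∀ k, 0 ≤ f k := by
    intro k
    have := abs_nonneg x
    positivity
  set q : ℕ → ℝ := fun k => x ^ 2 * t ^ (-2 / β) *
      (((2 * (k:ℝ) + 2) * (2 * (k:ℝ) + 3)) ^ (1 / β - 1)) with hq
  have hrec : ∀ k : ℕ, f (k + 1) = f k * q k := by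
    intro k
    have hfact : ((2 * (k + 1) + 1).factorial : ℝ) =
        ((2 * k + 1).factorial : ℝ) * ((2 * (k:ℝ) + 2) * (2 * (k:ℝ) + 3)) := by
      have h1 : 2 * (k + 1) + 1 = (2 * k + 2) + 1 := by ring
      have h2 : 2 * k + 2 = (2 * k + 1) + 1 := by ring
      rw [h1, Nat.factorial_succ, h2, Nat.factorial_succ]
      push_cast
      ring
    have hrt : t ^ (-(β + 2 * ((k:ℝ) + 1) + 1) / β) =
        t ^ (-(β + 2 * (k:ℝ) + 1) / β) * t ^ (-2 / β) := by
      rw [← Real.rpow_add ht]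
      congr 1
      field_simp
      ring
    have hrf : ((2 * (k + 1) + 1).factorial : ℝ) ^ (1 / β) =
        ((2 * k + 1).factorial : ℝ) ^ (1 / β) *
          (((2 * (k:ℝ) + 2) * (2 * (k:ℝ) + 3))) ^ (1 / β) := by
      rw [hfact, Real.mul_rpow (by positivity) (by positivity)]
    have habs : |x| ^ (2 * (k + 1) + 1) = |x| ^ (2 * k + 1) * x ^ 2 := by
      rw [show 2 * (k + 1) + 1 = (2 * k + 1) + 2 by ring, pow_add, sq_abs]
    have hn : (0:ℝ) < (2 * (k:ℝ) + 2) * (2 * (k:ℝ) + 3) := by positivity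
    have hsplit : (((2 * (k:ℝ) + 2) * (2 * (k:ℝ) + 3))) ^ (1 / β - 1) =
        (((2 * (k:ℝ) + 2) * (2 * (k:ℝ) + 3))) ^ (1 / β) *
        (((2 * (k:ℝ) + 2) * (2 * (k:ℝ) + 3)))⁻¹ := by
      rw [Real.rpow_sub hn, Real.rpow_one, div_eq_mul_inv]
    simp only [hf, hq]
    push_cast
    rw [habs, hrt, hrf, hfact, hsplit]
    field_simp
  have hq0 : ∀ k, 0 ≤ q k := fun k => by
    have : (0:ℝ) < (2 * (k:ℝ) + 2) * (2 * (k:ℝ) + 3) := by positivity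
    positivity
  have htend : Tendsto q atTop (nhds (x ^ 2 * t ^ (-2 / β) * 0)) := by
    apply Tendsto.const_mul
    have h1 : Tendsto (fun k : ℕ => (2 * (k:ℝ) + 2) * (2 * (k:ℝ) + 3)) atTop atTop := by
      apply tendsto_atTop_mono (fun k => ?_) tendsto_natCast_atTop_atTop
      have : (0:ℝ) ≤ (k:ℝ) := Nat.cast_nonneg k
      nlinarith
    have h2 : Tendsto (fun y : ℝ => y ^ (1 / β - 1)) atTop (nhds 0) := by
      have h3 : (0:ℝ) < 1 - 1 / β := by
        have : 1 / β < 1 := by rw [div_lt_one hβ0]; exact hβ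
        linarith
      have := tendsto_rpow_neg_atTop h3
      simpa [show -(1 - 1/β) = 1/β - 1 by ring] using this
    exact h2.comp h1
  rw [mul_zero] at htend
  have hev : ∀ᶠ k in atTop, q k ≤ 1 / 2 :=
    htend.eventually_le_const (by norm_num)
  apply summable_of_ratio_norm_eventually_le (r := 1 / 2) (by norm_num)
  filter_upwards [hev] with k hk
  rw [Real.norm_of_nonneg (hfpos _), Real.norm_of_nonneg (hfpos _), hrec k]
  calc f k * q k ≤ f k * (1 / 2) := mul_le_mul_of_nonneg_left hk (hfpos k)
    _ = 1 / 2 * f k := by ring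

/-- For `α > 1`, `0 < θ < 1` with `αθ > 1`, `t > 0` and
`x ≠ 0`, the density of the subordinated Fresnel pseudoprocess admits the
Weibull probabilistic representation
`(1/(αθπ t^{1/(αθ)})) ∑_{k=0}^∞ (x/t^{1/(αθ)})^{2k} (Γ((2k+1)/(αθ))/(2k)!)
   sin(π(2k+1)(α+1)/(2α))
 = (αθt/(πx)) ∫_0^∞ e^{-t y^{αθ}} y^{αθ−1} sin(x y cos(π/(2α)))
   cosh(x y sin(π/(2α))) dy`. -/
theorem subordinatedFresnel_weibull_repr (α θ t x : ℝ) (hα : 1 < α)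
    (hθ0 : 0 < θ) (hθ1 : θ < 1) (hαθ : 1 < α * θ) (ht : 0 < t) (hx : x ≠ 0) :
    (1 / (α * θ * π * t ^ (1 / (α * θ)))) *
        ∑' k : ℕ, (x / t ^ (1 / (α * θ))) ^ (2 * k) *
          (Real.Gamma ((2 * k + 1) / (α * θ)) / (2 * k).factorial) *
          Real.sin (π * (2 * k + 1) * (α + 1) / (2 * α)) =
      (α * θ * t / (π * x)) *
        ∫ y in Ioi (0 : ℝ), Real.exp (-t * y ^ (α * θ)) * y ^ (α * θ - 1) *
          Real.sin (x * y * Real.cos (π / (2 * α))) *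
          Real.cosh (x * y * Real.sin (π / (2 * α))) := by
  have hα0 : 0 < α := lt_trans one_pos hα
  set β := α * θ with hβdef
  set φ := π / (2 * α) with hφdef
  have hβ1 : 1 < β := hαθ
  have hβ0 : 0 < β := lt_trans one_pos hβ1
  have hT : (0:ℝ) < t ^ (1/β) := Real.rpow_pos_of_pos ht _
  set F : ℕ → ℝ → ℝ := fun k y => Real.exp (-t * y ^ β) * y ^ (β - 1) *
      ((-1) ^ k * (x * y) ^ (2 * k + 1) * Real.cos ((2 * (k:ℝ) + 1) * φ) /
        (2 * k + 1).factorial) with hF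
  set c : ℕ → ℝ := fun k => (-1) ^ k * x ^ (2 * k + 1) * Real.cos ((2 * (k:ℝ) + 1) * φ) /
      (2 * k + 1).factorial with hc
  set g : ℕ → ℝ → ℝ := fun k y => y ^ (β + 2 * (k:ℝ)) * Real.exp (-t * y ^ β) with hg
  -- pointwise rewriting of F on Ioi 0
  have hcongr : ∀ k : ℕ, EqOn (F k) (fun y => c k * g k y) (Ioi 0) := by
    intro k y hy
    have hy0 : (0:ℝ) < y := hy
    have h2 : y ^ (2 * k + 1) = y ^ (((2 * k + 1 : ℕ)):ℝ) := (Real.rpow_natCast y (2*k+1)).symm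
    have h3 : y ^ (β - 1) * y ^ (((2 * k + 1 : ℕ)):ℝ) = y ^ (β + 2 * (k:ℝ)) := by
      rw [← Real.rpow_add hy0]
      congr 1
      push_cast
      ring
    simp only [hF, hc, hg]
    rw [mul_pow, h2, ← h3]
    ring
  have hq1 : ∀ k : ℕ, (-1:ℝ) < β + 2 * (k:ℝ) := by
    intro k
    have : (0:ℝ) ≤ (k:ℝ) := Nat.cast_nonneg k
    nlinarith
  have hgInt : ∀ k : ℕ, IntegrableOn (g k) (Ioi 0) := by
    intro k
    exact integrableOn_rpow_mul_exp_neg_mul_rpow (hq1 k) hβ0 ht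
  have hmellin : ∀ k : ℕ, ∫ y in Ioi 0, g k y =
      t ^ (-(β + 2 * (k:ℝ) + 1) / β) * (1 / β) * Real.Gamma ((β + 2 * (k:ℝ) + 1) / β) := by
    intro k
    simp only [hg]
    exact integral_rpow_mul_exp_neg_mul_rpow hβ0 (hq1 k) ht
  have hInt : ∀ k : ℕ, IntegrableOn (F k) (Ioi 0) := by
    intro k
    have h1 : IntegrableOn (fun y => c k * g k y) (Ioi 0) := (hgInt k).const_mul (c k)
    exact IntegrableOn.congr_fun h1 (fun y hy => (hcongr k hy).symm) measurableSet_Ioi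
  have hIval : ∀ k : ℕ, ∫ y in Ioi 0, F k y =
      c k * (t ^ (-(β + 2 * (k:ℝ) + 1) / β) * (1 / β) *
        Real.Gamma ((β + 2 * (k:ℝ) + 1) / β)) := by
    intro k
    rw [setIntegral_congr_fun measurableSet_Ioi (hcongr k), integral_const_mul, hmellin k]
  have hnorm : ∀ k : ℕ, ∫ y in Ioi 0, ‖F k y‖ =
      |c k| * (t ^ (-(β + 2 * (k:ℝ) + 1) / β) * (1 / β) *
        Real.Gamma ((β + 2 * (k:ℝ) + 1) / β)) := by
    intro k
    have heq : EqOn (fun y => ‖F k y‖) (fun y => |c k| * g k y) (Ioi 0) := by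
      intro y hy
      have hy0 : (0:ℝ) < y := hy
      have hgpos : 0 ≤ g k y := by
        simp only [hg]; positivity
      simp only [Real.norm_eq_abs]
      rw [hcongr k hy, abs_mul, abs_of_nonneg hgpos]
    rw [setIntegral_congr_fun measurableSet_Ioi heq, integral_const_mul, hmellin k]
  -- summability of the integrals of the norms
  have hSummable : Summable fun k : ℕ => ∫ y in Ioi 0, ‖F k y‖ := by
    refine Summable.of_nonneg_of_le
      (fun k => integral_nonneg fun y => norm_nonneg _)
      (fun k => ?_) (my_summable (x := x) hβ1 ht)
    rw [hnorm k]
    have hck : |c k| ≤ |x| ^ (2 * k + 1) / (2 * k + 1).factorial := by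
      simp only [hc]
      rw [abs_div, abs_mul, abs_mul, abs_pow, abs_neg, abs_one, one_pow, one_mul, abs_pow,
        Nat.abs_cast]
      gcongr
      exact mul_le_of_le_one_right (by positivity) (Real.abs_cos_le_one _)
    have hΓ : Real.Gamma ((β + 2 * (k:ℝ) + 1) / β) ≤ ((2 * k + 1).factorial : ℝ) ^ (1 / β) := by
      have h := my_Gamma_div_le hβ1 (2 * k + 1)
      have harg : ((2 * k + 1 : ℕ):ℝ) / β + 1 = (β + 2 * (k:ℝ) + 1) / β := by
        push_cast; field_simp; ring
      rwa [harg] at h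
    have hΓpos : 0 < Real.Gamma ((β + 2 * (k:ℝ) + 1) / β) := by
      apply Real.Gamma_pos_of_pos
      have : (0:ℝ) ≤ (k:ℝ) := Nat.cast_nonneg k
      positivity
    calc |c k| * (t ^ (-(β + 2 * (k:ℝ) + 1) / β) * (1 / β) *
          Real.Gamma ((β + 2 * (k:ℝ) + 1) / β))
        ≤ (|x| ^ (2 * k + 1) / (2 * k + 1).factorial) *
          (t ^ (-(β + 2 * (k:ℝ) + 1) / β) * (1 / β) *
            ((2 * k + 1).factorial : ℝ) ^ (1 / β)) := by
          apply mul_le_mul hck (mul_le_mul_of_nonneg_left hΓ (by positivity))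
            (by positivity) (by positivity)
      _ = |x| ^ (2 * k + 1) / (2 * k + 1).factorial *
          (t ^ (-(β + 2 * (k:ℝ) + 1) / β) * (1 / β)) *
          ((2 * k + 1).factorial : ℝ) ^ (1 / β) := by ring
  -- interchange sum and integral
  have hswap := hasSum_integral_of_summable_integral_norm
    (μ := volume.restrict (Ioi (0:ℝ))) hInt hSummable
  -- pointwise sum equals the integrand
  have hpt : EqOn (fun y => ∑' k : ℕ, F k y)
      (fun y => Real.exp (-t * y ^ β) * y ^ (β - 1) *
        Real.sin (x * y * Real.cos φ) * Real.cosh (x * y * Real.sin φ)) (Ioi 0) := by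
    intro y _
    have hs := (my_hasSum_sin_cosh (x * y) φ).mul_left
      (Real.exp (-t * y ^ β) * y ^ (β - 1))
    simp only [hF]
    rw [hs.tsum_eq]
    ring
  have hR : (∫ y in Ioi (0:ℝ), Real.exp (-t * y ^ β) * y ^ (β - 1) *
        Real.sin (x * y * Real.cos φ) * Real.cosh (x * y * Real.sin φ)) =
      ∑' k : ℕ, ∫ y in Ioi 0, F k y := by
    rw [← setIntegral_congr_fun measurableSet_Ioi hpt]
    exact hswap.tsum_eq.symm
  rw [hR]
  -- sine identity
  have hsin : ∀ k : ℕ, Real.sin (π * (2 * (k:ℝ) + 1) * (α + 1) / (2 * α)) =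
      (-1) ^ k * Real.cos ((2 * (k:ℝ) + 1) * φ) := by
    intro k
    have h : π * (2 * (k:ℝ) + 1) * (α + 1) / (2 * α) =
        ((2 * (k:ℝ) + 1) * φ + π / 2) + (k:ℤ) * π := by
      simp only [hφdef]
      push_cast
      field_simp
      ring
    rw [h, Real.sin_add_int_mul_pi, Real.sin_add_pi_div_two, zpow_natCast]
  -- term-by-term identity
  have hterm : ∀ k : ℕ,
      1 / (β * π * t ^ (1/β)) * ((x / t ^ (1/β)) ^ (2 * k) *
        (Real.Gamma ((2 * (k:ℝ) + 1) / β) / (2 * k).factorial) *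
        Real.sin (π * (2 * (k:ℝ) + 1) * (α + 1) / (2 * α))) =
      β * t / (π * x) * (∫ y in Ioi 0, F k y) := by
    intro k
    rw [hIval k, hsin k]
    have hk0 : (0:ℝ) < 2 * (k:ℝ) + 1 := by positivity
    have hΓ1 : Real.Gamma ((β + 2 * (k:ℝ) + 1) / β) =
        ((2 * (k:ℝ) + 1) / β) * Real.Gamma ((2 * (k:ℝ) + 1) / β) := by
      have harg : (β + 2 * (k:ℝ) + 1) / β = (2 * (k:ℝ) + 1) / β + 1 := by
        field_simp
        ring
      rw [harg, Real.Gamma_add_one (ne_of_gt (by positivity))]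
    rw [hΓ1]
    have hfac : ((2 * k + 1).factorial : ℝ) = (2 * (k:ℝ) + 1) * (2 * k).factorial := by
      rw [show 2 * k + 1 = (2 * k) + 1 from rfl, Nat.factorial_succ]
      push_cast
      ring
    have hT2k : (t ^ (1/β)) ^ (2 * k) = t ^ ((2 * (k:ℝ)) / β) := by
      rw [← Real.rpow_natCast (t ^ (1/β)) (2 * k), ← Real.rpow_mul ht.le]
      congr 1
      push_cast
      ring
    have hE : t ^ (-(β + 2 * (k:ℝ) + 1) / β) =
        (t * (t ^ (1/β) * t ^ ((2 * (k:ℝ)) / β)))⁻¹ := by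
      rw [show -(β + 2 * (k:ℝ) + 1) / β = -((1:ℝ) + (1/β + 2 * (k:ℝ)/β)) by
          field_simp; ring,
        Real.rpow_neg ht.le, Real.rpow_add ht, Real.rpow_add ht, Real.rpow_one]
    simp only [hc]
    rw [hE, hfac, div_pow, hT2k, show x ^ (2 * k + 1) = x ^ (2 * k) * x from pow_succ x (2*k)]
    have hfn : ((2 * k).factorial : ℝ) ≠ 0 := by positivity
    have ht2k : t ^ ((2 * (k:ℝ)) / β) ≠ 0 := ne_of_gt (Real.rpow_pos_of_pos ht _)
    field_simp
  calc 1 / (β * π * t ^ (1/β)) * ∑' k : ℕ, (x / t ^ (1/β)) ^ (2 * k) *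
        (Real.Gamma ((2 * (k:ℝ) + 1) / β) / (2 * k).factorial) *
        Real.sin (π * (2 * (k:ℝ) + 1) * (α + 1) / (2 * α))
      = ∑' k : ℕ, 1 / (β * π * t ^ (1/β)) * ((x / t ^ (1/β)) ^ (2 * k) *
        (Real.Gamma ((2 * (k:ℝ) + 1) / β) / (2 * k).factorial) *
        Real.sin (π * (2 * (k:ℝ) + 1) * (α + 1) / (2 * α))) := (tsum_mul_left).symm
    _ = ∑' k : ℕ, β * t / (π * x) * (∫ y in Ioi 0, F k y) := tsum_congr hterm
    _ = β * t / (π * x) * ∑' k : ℕ, ∫ y in Ioi 0, F k y := tsum_mul_left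
end
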